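/- Let Q1 and Q2 be probability measures on the real line. Suppose there exists a dense subset D of ℝ such that for all x < y in D with Q1((x,y]) > 0 and Q2((x,y]) > 0, the conditional distributions satisfy Q1(·|(x,y]) ≤_st Q2(·|(x,y]). Then Q1 ≤_lr Q2. -/

import Mathlib

open MeasureTheory Set Filter

open Topology Metric

noncomputable section

/-- `g` is a (measurable, nonnegative) density of `Q` with respect to `μ`,
i.e. `Q B = ∫_B g dμ` for all Borel sets `B`. -/
def IsDensity (Q μ : Measure ℝ) (g : ℝ → ENNReal) : Prop :=
  Measurable g ∧ ∀ B : Set ℝ, MeasurableSet B → Q B = ∫⁻ x in B, g x ∂μ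

/-- Likelihood ratio order `Q1 ≤_lr Q2`: there exist a σ-finite measure `μ` and densities
`g1 = dQ1/dμ`, `g2 = dQ2/dμ` such that the ratio `g2/g1` (with values in `[0,∞]`)
is nondecreasing on the set `{g1 + g2 > 0}`. -/
def LikelihoodRatioLE (Q1 Q2 : Measure ℝ) : Prop :=
  ∃ (μ : Measure ℝ) (g1 g2 : ℝ → ENNReal), SigmaFinite μ ∧
    IsDensity Q1 μ g1 ∧ IsDensity Q2 μ g2 ∧
    ∀ x y : ℝ, x ≤ y → 0 < g1 x + g2 x → 0 < g1 y + g2 y →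
      g2 x / g1 x ≤ g2 y / g1 y

/-- cross-multiplication for ENNReal ratios -/
lemma aux_cross_mul {p q P Q : ENNReal} (hle : p / P ≤ q / Q)
    (hP0 : P ≠ 0) (hPt : P ≠ ⊤) (hQ0 : Q ≠ 0) (hQt : Q ≠ ⊤) : p * Q ≤ q * P := by
  rw [ENNReal.div_le_iff hP0 hPt] at hle
  calc p * Q ≤ q / Q * P * Q := by gcongr
    _ = q / Q * Q * P := by ring
    _ = q * P := by rw [ENNReal.div_mul_cancel hQ0 hQt]

lemma aux_div_ratio {a b c d : ENNReal} (h : a * d ≤ c * b)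
    (hb0 : b ≠ 0) (hbt : b ≠ ⊤) (hd0 : d ≠ 0) (hdt : d ≠ ⊤) : a / b ≤ c / d := by
  rw [ENNReal.div_le_iff hb0 hbt]
  have hcan : a * d / d = a := by
    rw [mul_comm, div_eq_mul_inv, mul_assoc, ← div_eq_mul_inv,
      ENNReal.mul_div_cancel' (fun h => absurd h hd0) (fun h => absurd h hdt)]
  calc a = a * d / d := hcan.symm
    _ ≤ c * b / d := ENNReal.div_le_div h le_rfl
    _ = c / d * b := by rw [div_eq_mul_inv, div_eq_mul_inv]; ring

lemma aux_cross1 (Q1 Q2 : Measure ℝ) [IsProbabilityMeasure Q1] [IsProbabilityMeasure Q2]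
    (D : Set ℝ)
    (h : ∀ x y : ℝ, x ∈ D → y ∈ D → x < y →
      0 < Q1 (Ioc x y) → 0 < Q2 (Ioc x y) →
      ∀ t : ℝ, Q1 (Ioi t ∩ Ioc x y) / Q1 (Ioc x y) ≤ Q2 (Ioi t ∩ Ioc x y) / Q2 (Ioc x y))
    {a b c d : ℝ} (ha : a ∈ D) (hb : b ∈ D) (hc : c ∈ D) (hd : d ∈ D)
    (hab : a < b) (hbc : b ≤ c) (hcd : c < d) :
    Q2 (Ioc a b) * Q1 (Ioc c d) ≤ Q1 (Ioc a b) * Q2 (Ioc c d) := by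
  rcases eq_or_ne (Q2 (Ioc a b)) 0 with hα2 | hα2
  · rw [hα2, zero_mul]; exact zero_le
  rcases eq_or_ne (Q1 (Ioc c d)) 0 with hβ1 | hβ1
  · rw [hβ1, mul_zero]; exact zero_le
  have had : a < d := hab.trans_le (hbc.trans_lt hcd).le
  have hbd : b < d := hbc.trans_lt hcd
  have hsub1 : Ioc c d ⊆ Ioc a d := Ioc_subset_Ioc_left (hab.trans_le hbc).le
  have hsub2 : Ioc a b ⊆ Ioc a d := Ioc_subset_Ioc_right hbd.le
  have hsub3 : Ioc c d ⊆ Ioc b d := Ioc_subset_Ioc_left hbc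
  have hS1 : 0 < Q1 (Ioc a d) := lt_of_lt_of_le (pos_iff_ne_zero.mpr hβ1) (measure_mono hsub1)
  have hS2 : 0 < Q2 (Ioc a d) := lt_of_lt_of_le (pos_iff_ne_zero.mpr hα2) (measure_mono hsub2)
  have key1 := h a d ha hd had hS1 hS2 b
  rw [inter_comm, Ioc_inter_Ioi, max_eq_right hab.le] at key1
  -- key1 : Q1 (Ioc b d) / Q1 (Ioc a d) ≤ Q2 (Ioc b d) / Q2 (Ioc a d)
  have k1 : Q1 (Ioc b d) * Q2 (Ioc a d) ≤ Q2 (Ioc b d) * Q1 (Ioc a d) :=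
    aux_cross_mul key1 hS1.ne' (measure_ne_top _ _) hS2.ne' (measure_ne_top _ _)
  have hsplit1 : Q1 (Ioc a d) = Q1 (Ioc a b) + Q1 (Ioc b d) := by
    rw [← Ioc_union_Ioc_eq_Ioc hab.le hbd.le,
      measure_union (Ioc_disjoint_Ioc_of_le le_rfl) measurableSet_Ioc]
  have hsplit2 : Q2 (Ioc a d) = Q2 (Ioc a b) + Q2 (Ioc b d) := by
    rw [← Ioc_union_Ioc_eq_Ioc hab.le hbd.le,
      measure_union (Ioc_disjoint_Ioc_of_le le_rfl) measurableSet_Ioc]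
  -- cancel the common term
  have k2 : Q1 (Ioc b d) * Q2 (Ioc a b) ≤ Q2 (Ioc b d) * Q1 (Ioc a b) := by
    rw [hsplit1, hsplit2, mul_add, mul_add] at k1
    rw [← ENNReal.add_le_add_iff_right
      (show Q1 (Ioc b d) * Q2 (Ioc b d) ≠ ⊤ from
        ENNReal.mul_ne_top (measure_ne_top _ _) (measure_ne_top _ _))]
    calc Q1 (Ioc b d) * Q2 (Ioc a b) + Q1 (Ioc b d) * Q2 (Ioc b d) ≤
        Q2 (Ioc b d) * Q1 (Ioc a b) + Q2 (Ioc b d) * Q1 (Ioc b d) := k1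
      _ = Q2 (Ioc b d) * Q1 (Ioc a b) + Q1 (Ioc b d) * Q2 (Ioc b d) := by ring
  have hγ1 : Q1 (Ioc b d) ≠ 0 := by
    intro h0
    exact hβ1 (le_antisymm (h0 ▸ measure_mono hsub3) zero_le)
  have hγ2 : Q2 (Ioc b d) ≠ 0 := by
    intro h0
    rw [h0, zero_mul] at k2
    rcases mul_eq_zero.mp (le_antisymm k2 zero_le) with h' | h'
    · exact hγ1 h'
    · exact hα2 h'
  have key2 := h b d hb hd hbd (pos_iff_ne_zero.mpr hγ1) (pos_iff_ne_zero.mpr hγ2) c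
  rw [inter_comm, Ioc_inter_Ioi, max_eq_right hbc] at key2
  have k3 : Q1 (Ioc c d) * Q2 (Ioc b d) ≤ Q2 (Ioc c d) * Q1 (Ioc b d) :=
    aux_cross_mul key2 (pos_iff_ne_zero.mpr hγ1).ne' (measure_ne_top _ _)
      (pos_iff_ne_zero.mpr hγ2).ne' (measure_ne_top _ _)
  -- combine k2 and k3
  have hprod : Q2 (Ioc a b) * Q1 (Ioc c d) * (Q1 (Ioc b d) * Q2 (Ioc b d)) ≤
      Q1 (Ioc a b) * Q2 (Ioc c d) * (Q1 (Ioc b d) * Q2 (Ioc b d)) := by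
    calc Q2 (Ioc a b) * Q1 (Ioc c d) * (Q1 (Ioc b d) * Q2 (Ioc b d))
        = (Q1 (Ioc b d) * Q2 (Ioc a b)) * (Q1 (Ioc c d) * Q2 (Ioc b d)) := by ring
      _ ≤ (Q2 (Ioc b d) * Q1 (Ioc a b)) * (Q2 (Ioc c d) * Q1 (Ioc b d)) := mul_le_mul' k2 k3
      _ = Q1 (Ioc a b) * Q2 (Ioc c d) * (Q1 (Ioc b d) * Q2 (Ioc b d)) := by ring
  exact (ENNReal.mul_le_mul_iff_left
    (mul_ne_zero hγ1 hγ2)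
    (ENNReal.mul_ne_top (measure_ne_top _ _) (measure_ne_top _ _))).mp hprod

/-- squeeze: measures of approximating Ioc intervals converge to the measure of Icc -/
lemma aux_squeeze (ν : Measure ℝ) [IsFiniteMeasure ν] {p q : ℝ} {u v : ℕ → ℝ}
    (hu1 : ∀ n : ℕ, p - 1 / (n + 1) ≤ u n) (hu2 : ∀ n, u n < p)
    (hv1 : ∀ n, q ≤ v n) (hv2 : ∀ n : ℕ, v n ≤ q + 1 / (n + 1)) :
    Tendsto (fun n => ν (Ioc (u n) (v n))) atTop (𝓝 (ν (Icc p q))) := by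
  have hiInter : (⋂ n : ℕ, Ioc (p - 1 / (n + 1)) (q + 1 / (n + 1))) = Icc p q := by
    ext x
    simp only [mem_iInter, mem_Ioc, mem_Icc]
    constructor
    · intro hx
      constructor
      · by_contra hlt
        push_neg at hlt
        obtain ⟨n, hn⟩ := exists_nat_one_div_lt (show (0:ℝ) < p - x by linarith)
        have := (hx n).1
        linarith
      · refine le_of_forall_pos_le_add fun ε hε => ?_
        obtain ⟨n, hn⟩ := exists_nat_one_div_lt hε
        have := (hx n).2
        linarith
    · intro ⟨h1, h2⟩ n
      have hpos : (0:ℝ) < 1 / (n + 1) := by positivity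
      exact ⟨by linarith, by linarith⟩
  have hanti : Antitone fun n : ℕ => Ioc (p - 1 / (n + 1 : ℝ)) (q + 1 / (n + 1 : ℝ)) := by
    intro n m hnm
    have h1 : (1:ℝ) / (m + 1) ≤ 1 / (n + 1) := by
      apply one_div_le_one_div_of_le (by positivity)
      exact_mod_cast by omega
    exact Ioc_subset_Ioc (by linarith) (by linarith)
  have hbig : Tendsto (fun n : ℕ => ν (Ioc (p - 1 / (n + 1)) (q + 1 / (n + 1)))) atTop
      (𝓝 (ν (Icc p q))) := by
    rw [← hiInter]
    exact tendsto_measure_iInter_atTop (fun n => measurableSet_Ioc.nullMeasurableSet)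
      hanti ⟨0, measure_ne_top _ _⟩
  refine tendsto_of_tendsto_of_tendsto_of_le_of_le tendsto_const_nhds hbig
    (fun n => measure_mono fun x hx => ?_) (fun n => measure_mono (Ioc_subset_Ioc (hu1 n) (hv2 n)))
  exact ⟨(hu2 n).trans_le hx.1, hx.2.trans (hv1 n)⟩

lemma aux_cross_Icc (Q1 Q2 : Measure ℝ) [IsProbabilityMeasure Q1] [IsProbabilityMeasure Q2]
    (D : Set ℝ) (hD : Dense D)
    (h : ∀ x y : ℝ, x ∈ D → y ∈ D → x < y →
      0 < Q1 (Ioc x y) → 0 < Q2 (Ioc x y) →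
      ∀ t : ℝ, Q1 (Ioi t ∩ Ioc x y) / Q1 (Ioc x y) ≤ Q2 (Ioi t ∩ Ioc x y) / Q2 (Ioc x y))
    {p q s t : ℝ} (hpq : p ≤ q) (hqs : q < s) (hst : s ≤ t) :
    Q2 (Icc p q) * (Q1 + Q2) (Icc s t) ≤ (Q1 + Q2) (Icc p q) * Q2 (Icc s t) := by
  set m : ℝ := (q + s) / 2 with hm
  have hqm : q < m := by rw [hm]; linarith
  have hms : m < s := by rw [hm]; linarith
  have hexA : ∀ n : ℕ, ∃ z ∈ D, z ∈ Ioo (p - 1 / (n + 1)) p :=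
    fun n => hD.exists_between (sub_lt_self p (by positivity))
  have hexB : ∀ n : ℕ, ∃ z ∈ D, z ∈ Ioo q (min (q + 1 / (n + 1)) m) :=
    fun n => hD.exists_between (lt_min (lt_add_of_pos_right q (by positivity)) hqm)
  have hexC : ∀ n : ℕ, ∃ z ∈ D, z ∈ Ioo (max (s - 1 / (n + 1)) m) s :=
    fun n => hD.exists_between (max_lt (sub_lt_self s (by positivity)) hms)
  have hexE : ∀ n : ℕ, ∃ z ∈ D, z ∈ Ioo t (t + 1 / (n + 1)) :=
    fun n => hD.exists_between (lt_add_of_pos_right t (by positivity))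
  choose A hAD hA using hexA
  choose B hBD hB using hexB
  choose C hCD hC using hexC
  choose E hED hE using hexE
  have hineq : ∀ n : ℕ, Q2 (Ioc (A n) (B n)) * (Q1 + Q2) (Ioc (C n) (E n)) ≤
      (Q1 + Q2) (Ioc (A n) (B n)) * Q2 (Ioc (C n) (E n)) := by
    intro n
    have hab : A n < B n := (hA n).2.trans_le (hpq.trans (hB n).1.le)
    have hbc : B n ≤ C n := ((hB n).2.trans_le (min_le_right _ _)).le.trans
      ((le_max_right _ _).trans (hC n).1.le)
    have hcd : C n < E n := (hC n).2.trans_le (hst.trans (hE n).1.le)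
    have key := aux_cross1 Q1 Q2 D h (hAD n) (hBD n) (hCD n) (hED n) hab hbc hcd
    simp only [Measure.add_apply]
    calc Q2 (Ioc (A n) (B n)) * (Q1 (Ioc (C n) (E n)) + Q2 (Ioc (C n) (E n)))
        = Q2 (Ioc (A n) (B n)) * Q1 (Ioc (C n) (E n))
          + Q2 (Ioc (A n) (B n)) * Q2 (Ioc (C n) (E n)) := by ring
      _ ≤ Q1 (Ioc (A n) (B n)) * Q2 (Ioc (C n) (E n))
          + Q2 (Ioc (A n) (B n)) * Q2 (Ioc (C n) (E n)) := add_le_add key le_rfl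
      _ = (Q1 (Ioc (A n) (B n)) + Q2 (Ioc (A n) (B n))) * Q2 (Ioc (C n) (E n)) := by ring
  have ht1 : Tendsto (fun n => Q2 (Ioc (A n) (B n))) atTop (𝓝 (Q2 (Icc p q))) :=
    aux_squeeze Q2 (fun n => (hA n).1.le) (fun n => (hA n).2)
      (fun n => (hB n).1.le) (fun n => ((hB n).2.trans_le (min_le_left _ _)).le)
  have ht2 : Tendsto (fun n => (Q1 + Q2) (Ioc (C n) (E n))) atTop (𝓝 ((Q1 + Q2) (Icc s t))) :=
    aux_squeeze (Q1 + Q2) (fun n => (le_max_left _ _).trans (hC n).1.le)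
      (fun n => (hC n).2) (fun n => (hE n).1.le) (fun n => (hE n).2.le)
  have ht3 : Tendsto (fun n => (Q1 + Q2) (Ioc (A n) (B n))) atTop (𝓝 ((Q1 + Q2) (Icc p q))) :=
    aux_squeeze (Q1 + Q2) (fun n => (hA n).1.le) (fun n => (hA n).2)
      (fun n => (hB n).1.le) (fun n => ((hB n).2.trans_le (min_le_left _ _)).le)
  have ht4 : Tendsto (fun n => Q2 (Ioc (C n) (E n))) atTop (𝓝 (Q2 (Icc s t))) :=
    aux_squeeze Q2 (fun n => (le_max_left _ _).trans (hC n).1.le)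
      (fun n => (hC n).2) (fun n => (hE n).1.le) (fun n => (hE n).2.le)
  exact le_of_tendsto_of_tendsto'
    (ENNReal.Tendsto.mul ht1 (Or.inr (measure_ne_top _ _)) ht2 (Or.inr (measure_ne_top _ _)))
    (ENNReal.Tendsto.mul ht3 (Or.inr (measure_ne_top _ _)) ht4 (Or.inr (measure_ne_top _ _)))
    hineq

theorem stmt_8 (Q1 Q2 : Measure ℝ) [IsProbabilityMeasure Q1] [IsProbabilityMeasure Q2]
    (D : Set ℝ) (hD : Dense D)
    (h : ∀ x y : ℝ, x ∈ D → y ∈ D → x < y →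
      0 < Q1 (Ioc x y) → 0 < Q2 (Ioc x y) →
      ∀ t : ℝ, Q1 (Ioi t ∩ Ioc x y) / Q1 (Ioc x y) ≤ Q2 (Ioi t ∩ Ioc x y) / Q2 (Ioc x y)) :
    LikelihoodRatioLE Q1 Q2 := by
  set μ : Measure ℝ := Q1 + Q2 with hμdef
  set r : ℝ → ENNReal := Q2.rnDeriv μ with hrdef
  have hQ2le : Q2 ≤ μ := Measure.le_add_left le_rfl
  have hQ2μ : Q2 ≪ μ := hQ2le.absolutelyContinuous
  have hrmeas : Measurable r := Measure.measurable_rnDeriv Q2 μ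
  have hbes : ∀ᵐ x ∂μ, Tendsto (fun ρ => Q2 (closedBall x ρ) / μ (closedBall x ρ))
      (𝓝[>] 0) (𝓝 (r x)) := Besicovitch.ae_tendsto_rnDeriv Q2 μ
  have hr1 : ∀ᵐ x ∂μ, r x ≤ 1 := Measure.rnDeriv_le_one_of_le hQ2le
  set K : Set ℝ := {x : ℝ | ∀ ρ : ℝ, 0 < ρ → 0 < μ (closedBall x ρ)} with hKdef
  have hKc : μ Kᶜ = 0 := by
    apply measure_null_of_locally_null
    intro x hx
    simp only [hKdef, mem_compl_iff, mem_setOf_eq, not_forall] at hx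
    obtain ⟨ρ, hρ0, hρ⟩ := hx
    refine ⟨closedBall x ρ, mem_nhdsWithin_of_mem_nhds (closedBall_mem_nhds x hρ0), ?_⟩
    simpa [pos_iff_ne_zero, not_not] using hρ
  have haeK : ∀ᵐ x ∂μ, x ∈ K := by
    rw [ae_iff]
    convert hKc using 2
    rfl
  set P : ℝ → Prop := fun x =>
    (Tendsto (fun ρ => Q2 (closedBall x ρ) / μ (closedBall x ρ)) (𝓝[>] 0) (𝓝 (r x)))
    ∧ r x ≤ 1 ∧ x ∈ K with hPdef
  have hae : ∀ᵐ x ∂μ, P x := by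
    filter_upwards [hbes, hr1, haeK] with x h1 h2 h3
    exact ⟨h1, h2, h3⟩
  set N : Set ℝ := toMeasurable μ {x | ¬ P x} with hNdef
  have hNnull : μ N = 0 := by
    rw [hNdef, measure_toMeasurable]
    exact hae
  set S : Set ℝ := Nᶜ with hSdef
  have hSmeas : MeasurableSet S := (measurableSet_toMeasurable μ _).compl
  have hSP : ∀ x ∈ S, P x := by
    intro x hx
    by_contra hc
    exact hx (subset_toMeasurable _ _ hc)
  have hSae : ∀ᵐ x ∂μ, x ∈ S := by
    rw [ae_iff]
    convert hNnull using 2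
    simp [hSdef]
  set g2 : ℝ → ENNReal := S.indicator r with hg2def
  set g1 : ℝ → ENNReal := S.indicator (fun x => 1 - r x) with hg1def
  refine ⟨μ, g1, g2, inferInstance,
    ⟨Measurable.indicator (by fun_prop) hSmeas, ?_⟩,
    ⟨hrmeas.indicator hSmeas, ?_⟩, ?_⟩
  · -- density of Q1
    intro B hB
    have hcong : ∫⁻ x in B, g1 x ∂μ = ∫⁻ x in B, (1 - r x) ∂μ := by
      apply lintegral_congr_ae
      apply ae_restrict_of_ae
      filter_upwards [hSae] with x hx
      rw [hg1def, indicator_of_mem hx]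
    have hsub : ∫⁻ x in B, (1 - r x) ∂μ
        = ∫⁻ x in B, (1 : ENNReal) ∂μ - ∫⁻ x in B, r x ∂μ := by
      apply lintegral_sub hrmeas
      · rw [Measure.setLIntegral_rnDeriv' hQ2μ hB]
        exact measure_ne_top _ _
      · exact ae_restrict_of_ae hr1
    rw [hcong, hsub, Measure.setLIntegral_rnDeriv' hQ2μ hB, setLIntegral_one,
      hμdef, Measure.add_apply, ENNReal.add_sub_cancel_right (measure_ne_top _ _)]
  · -- density of Q2
    intro B hB
    have hcong : ∫⁻ x in B, g2 x ∂μ = ∫⁻ x in B, r x ∂μ := by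
      apply lintegral_congr_ae
      apply ae_restrict_of_ae
      filter_upwards [hSae] with x hx
      rw [hg2def, indicator_of_mem hx]
    rw [hcong, Measure.setLIntegral_rnDeriv' hQ2μ hB]
  · -- monotonicity
    intro x y hxy hx hy
    have hxS : x ∈ S := by
      by_contra hc
      simp only [hg1def, hg2def, indicator_of_notMem hc, add_zero] at hx
      exact lt_irrefl 0 hx
    have hyS : y ∈ S := by
      by_contra hc
      simp only [hg1def, hg2def, indicator_of_notMem hc, add_zero] at hy
      exact lt_irrefl 0 hy
    obtain ⟨htx, hrx1, hxK⟩ := hSP x hxS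
    obtain ⟨hty, hry1, hyK⟩ := hSP y hyS
    have hkey : r x ≤ r y := by
      rcases hxy.eq_or_lt with rfl | hlt
      · exact le_rfl
      refine le_of_tendsto_of_tendsto htx hty ?_
      have hmem : Ioo (0:ℝ) ((y - x) / 2) ∈ 𝓝[>] (0:ℝ) :=
        Ioo_mem_nhdsGT (by linarith)
      filter_upwards [hmem] with ρ hρ
      obtain ⟨hρ0, hρ2⟩ := hρ
      have hcross : Q2 (closedBall x ρ) * μ (closedBall y ρ)
          ≤ μ (closedBall x ρ) * Q2 (closedBall y ρ) := by
        rw [Real.closedBall_eq_Icc, Real.closedBall_eq_Icc]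
        exact aux_cross_Icc Q1 Q2 D hD h (by linarith) (by linarith) (by linarith)
      exact aux_div_ratio (hcross.trans_eq (mul_comm _ _))
        (hxK ρ hρ0).ne' (measure_ne_top _ _) (hyK ρ hρ0).ne' (measure_ne_top _ _)
    rw [hg1def, hg2def, indicator_of_mem hxS, indicator_of_mem hyS,
      indicator_of_mem hxS, indicator_of_mem hyS]
    exact ENNReal.div_le_div hkey (tsub_le_tsub_left hkey 1)
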